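/- Let M ≥ 1, θ, c : Fin M → ℝ, C ∈ ℝ, let q be a probability vector on Fin M, and let the feasible set S = {π : Fin M → ℝ | π is a probability vector and ∑_b π b · c b ≤ C} be nonempty. Define R(π) = ∑_b ∑_a π b · q a · σ(θ b − θ a) and let θ′(π) be the unique t with ∑_a q a · σ(t − θ a) = R(π). Then R attains a maximum R* over S, θ′ attains a maximum over S, and the maximum of θ′ over S equals the unique root t* ∈ ℝ of the equation ∑_a q a · σ(t* − θ a) = R*. -/
import Mathlib


/-- The logistic sigmoid `σ(t) = 1 / (1 + exp (-t))`. -/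
noncomputable def sigmoid (t : ℝ) : ℝ := 1 / (1 + Real.exp (-t))

/-- A probability vector on `Fin M`. -/
def IsProbVec {M : ℕ} (q : Fin M → ℝ) : Prop := (∀ a, 0 ≤ q a) ∧ ∑ a, q a = 1

lemma sigmoid_strictMono : StrictMono sigmoid := by
  intro s t hst
  unfold sigmoid
  have h1 : (0:ℝ) < 1 + Real.exp (-t) := by positivity
  apply one_div_lt_one_div_of_lt h1
  have := Real.exp_lt_exp.mpr (neg_lt_neg hst)
  linarith

/-- **correctness of Algorithm 1.** Over the nonempty feasible set
`S = {π | π a probability vector, ∑ b, π b * c b ≤ C}`, the win rate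
`R(π) = ∑ b, ∑ a, π b * q a * σ(θ b - θ a)` attains a maximum at some `π* ∈ S`; this `π*`
also maximizes the Bradley–Terry coefficient `θ′` over `S` (so `θ′` attains its maximum),
and that maximal value `θ′ π*` is the unique root `t*` of `∑ a, q a * σ(t* - θ a) = R(π*)`,
where `R(π*) = R*` is the maximal win rate. -/
theorem algorithm_one_correctness {M : ℕ} (hM : 1 ≤ M) (θ c : Fin M → ℝ) (C : ℝ)
    (q : Fin M → ℝ) (hq : IsProbVec q)
    (hS : ∃ π : Fin M → ℝ, IsProbVec π ∧ (∑ b, π b * c b) ≤ C)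
    (θ' : (Fin M → ℝ) → ℝ)
    (hθ' : ∀ π : Fin M → ℝ, IsProbVec π →
        ∑ a, q a * sigmoid (θ' π - θ a) = ∑ b, ∑ a, π b * q a * sigmoid (θ b - θ a)) :
    ∃ πstar : Fin M → ℝ, IsProbVec πstar ∧ (∑ b, πstar b * c b) ≤ C ∧
      (∀ π : Fin M → ℝ, IsProbVec π → (∑ b, π b * c b) ≤ C →
          ∑ b, ∑ a, π b * q a * sigmoid (θ b - θ a)
            ≤ ∑ b, ∑ a, πstar b * q a * sigmoid (θ b - θ a)) ∧
      (∀ π : Fin M → ℝ, IsProbVec π → (∑ b, π b * c b) ≤ C → θ' π ≤ θ' πstar) ∧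
      (∀ t : ℝ,
          ∑ a, q a * sigmoid (t - θ a) = ∑ b, ∑ a, πstar b * q a * sigmoid (θ b - θ a) →
          t = θ' πstar) := by
  classical
  set f : (Fin M → ℝ) → ℝ := fun π => ∑ b, ∑ a, π b * q a * sigmoid (θ b - θ a) with hf
  set S : Set (Fin M → ℝ) := {π | IsProbVec π ∧ (∑ b, π b * c b) ≤ C} with hSdef
  -- continuity of f
  have hfc : Continuous f := by
    apply continuous_finset_sum
    intro b _
    apply continuous_finset_sum
    intro a _
    exact ((continuous_apply b).mul continuous_const).mul continuous_const
  -- S is closed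
  have hclosed : IsClosed S := by
    have h1 : IsClosed {π : Fin M → ℝ | ∀ a, 0 ≤ π a} := by
      have : {π : Fin M → ℝ | ∀ a, 0 ≤ π a} = ⋂ a, {π | 0 ≤ π a} := by
        ext π; simp
      rw [this]
      exact isClosed_iInter fun a => isClosed_le continuous_const (continuous_apply a)
    have h2 : IsClosed {π : Fin M → ℝ | ∑ a, π a = 1} :=
      isClosed_eq (continuous_finset_sum _ fun a _ => continuous_apply a) continuous_const
    have h3 : IsClosed {π : Fin M → ℝ | (∑ b, π b * c b) ≤ C} :=
      isClosed_le (continuous_finset_sum _ fun b _ => (continuous_apply b).mul continuous_const)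
        continuous_const
    have : S = ({π : Fin M → ℝ | ∀ a, 0 ≤ π a} ∩ {π | ∑ a, π a = 1}) ∩
        {π | (∑ b, π b * c b) ≤ C} := by
      ext π; simp [hSdef, IsProbVec, and_assoc]
    rw [this]
    exact ((h1.inter h2).inter h3)
  -- S is compact: closed subset of [0,1]^M
  have hcompact : IsCompact S := by
    refine IsCompact.of_isClosed_subset
      (isCompact_pi_infinite (fun _ : Fin M => (isCompact_Icc : IsCompact (Set.Icc (0:ℝ) 1))))
      hclosed ?_
    intro π hπ
    intro a
    constructor
    · exact hπ.1.1 a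
    · have := hπ.1.2
      calc π a ≤ ∑ b, π b := Finset.single_le_sum (fun b _ => hπ.1.1 b) (Finset.mem_univ a)
        _ = 1 := this
  have hne : S.Nonempty := hS
  obtain ⟨πstar, hπS, hmax⟩ := hcompact.exists_isMaxOn hne hfc.continuousOn
  -- strict mono of G
  have ⟨a0, ha0⟩ : ∃ a, 0 < q a := by
    by_contra h
    push_neg at h
    have : ∑ a, q a ≤ 0 := Finset.sum_nonpos fun a _ => h a
    rw [hq.2] at this; linarith
  have hG : StrictMono (fun t => ∑ a, q a * sigmoid (t - θ a)) := by
    intro s t hst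
    apply Finset.sum_lt_sum
    · intro a _
      exact mul_le_mul_of_nonneg_left (sigmoid_strictMono (by linarith)).le (hq.1 a)
    · exact ⟨a0, Finset.mem_univ a0, by
        exact mul_lt_mul_of_pos_left (sigmoid_strictMono (by linarith : s - θ a0 < t - θ a0)) ha0⟩
  refine ⟨πstar, hπS.1, hπS.2, ?_, ?_, ?_⟩
  · intro π hπ hπC
    exact hmax ⟨hπ, hπC⟩
  · intro π hπ hπC
    have h1 := hθ' π hπ
    have h2 := hθ' πstar hπS.1
    have hle : f π ≤ f πstar := hmax ⟨hπ, hπC⟩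
    have : (fun t => ∑ a, q a * sigmoid (t - θ a)) (θ' π) ≤
        (fun t => ∑ a, q a * sigmoid (t - θ a)) (θ' πstar) := by
      simp only
      rw [h1, h2]; exact hle
    exact hG.le_iff_le.mp this
  · intro t ht
    have h2 := hθ' πstar hπS.1
    have : (fun t => ∑ a, q a * sigmoid (t - θ a)) t =
        (fun t => ∑ a, q a * sigmoid (t - θ a)) (θ' πstar) := by
      simp only
      rw [ht, h2]
    exact hG.injective this
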